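/- Let k ≥ 1, w ≥ 1, n = w + k − 1, and let D : Fin w → (Fin k → Bool) → ℝ be a family of window cost functions. For t : Fin n → Bool and j ∈ Fin w, let W_j(t) : Fin k → Bool be the window W_j(t)(i) = t(j + i). Define T : Fin w → (Fin k → Bool) → ℝ recursively by T(0, x) = D(0, x) and T(j+1, y) = D(j+1, y) + min_{b ∈ Bool} T(j, cons(b, y)), where cons(b, y)(0) = b and cons(b, y)(i+1) = y(i) for i < k−1. Then the minimum over all t : Fin n → Bool of the total cost Σ_{j ∈ Fin w} D(j, W_j(t)) equals min_{y : Fin k → Bool} T(w−1, y). -/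

import Mathlib

/-- Prepend the bit `b` to the window `y`, dropping the last entry of `y`. -/
def consDrop {k : ℕ} (b : Bool) (y : Fin k → Bool) : Fin k → Bool :=
  fun i => if i.1 = 0 then b else y ⟨i.1 - 1, by have := i.isLt; omega⟩

/-- The dynamic program for minimizing a sum of window costs over all binary
sequences: `Tdp D j y` is the minimal total cost of the first `j+1` windows
subject to the `(j+1)`-st window being `y`. -/
def Tdp {k : ℕ} (D : ℕ → (Fin k → Bool) → ℝ) : ℕ → (Fin k → Bool) → ℝ
  | 0, x => D 0 x
  | j + 1, y =>
      D (j + 1) y + min (Tdp D j (consDrop true y)) (Tdp D j (consDrop false y))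

/-- Correctness of the dynamic program: the minimum total window cost over all
binary sequences of length `n = w + k - 1` equals the minimum over the final
window of the DP value. -/
def glue {k : ℕ} (j : ℕ) (s : Fin j → Bool) (y : Fin k → Bool) : ℕ → Bool :=
  fun p => if h : p < j then s ⟨p, h⟩ else if h2 : p - j < k then y ⟨p - j, h2⟩ else false

lemma inf'_const_add {α : Type*} [Fintype α] [Nonempty α] (c : ℝ) (f : α → ℝ) :
    (Finset.univ.inf' Finset.univ_nonempty fun x => c + f x) =
      c + Finset.univ.inf' Finset.univ_nonempty f := by
  apply le_antisymm
  · obtain ⟨x, -, hx⟩ := Finset.exists_mem_eq_inf' (Finset.univ_nonempty) f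
    rw [hx]
    exact Finset.inf'_le _ (Finset.mem_univ x)
  · apply Finset.le_inf'
    intro x _
    exact add_le_add le_rfl (Finset.inf'_le _ (Finset.mem_univ x))

lemma glue_window_eq {k : ℕ} (j : ℕ) (s : Fin (j+1) → Bool) (y : Fin k → Bool)
    {m : ℕ} (hm : m ≤ j) (i : Fin k) :
    glue (j+1) s y (m + i.1) =
      glue j (Fin.init s) (consDrop (s (Fin.last j)) y) (m + i.1) := by
  have hik := i.isLt
  simp only [glue, consDrop, Fin.init, Fin.last, Fin.coe_castSucc]
  split_ifs with h1 h2 h3 h4 h5 h6 h7 h8 <;>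
    simp_all <;>
    first
      | omega
      | (exact congrArg s (Fin.ext (by simp; omega)))
      | (exact congrArg y (Fin.ext (by simp; omega)))

lemma glue_of_agree {k n : ℕ} (j : ℕ) (hn : n = j + k) (t : Fin n → Bool)
    (p : ℕ) (hp : p < n) :
    glue j (fun q : Fin j => t ⟨q.1, by omega⟩) (fun i : Fin k => t ⟨j + i.1, by omega⟩) p
      = t ⟨p, hp⟩ := by
  unfold glue
  split_ifs with h1 h2
  · rfl
  · exact congrArg t (Fin.ext (by simp; omega))
  · omega

lemma Tdp_eq {k : ℕ} (D' : ℕ → (Fin k → Bool) → ℝ) :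
    ∀ (j : ℕ) (y : Fin k → Bool),
      Tdp D' j y = Finset.univ.inf' Finset.univ_nonempty
        (fun s : Fin j → Bool =>
          ∑ m ∈ Finset.range (j+1), D' m (fun i => glue j s y (m + i.1))) := by
  intro j
  induction j with
  | zero =>
    intro y
    have hconst : (fun s : Fin 0 → Bool =>
        ∑ m ∈ Finset.range 1, D' m (fun i => glue 0 s y (m + i.1))) =
        fun _ => D' 0 y := by
      funext s
      rw [Finset.sum_range_one]
      congr 1
      funext i
      simp [glue, i.isLt]
    rw [hconst, Finset.inf'_const]
    rfl
  | succ j ih =>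
    intro y
    -- unfold Tdp one step
    show D' (j+1) y + min (Tdp D' j (consDrop true y)) (Tdp D' j (consDrop false y)) = _
    rw [ih, ih]
    -- abbreviations
    set c := D' (j+1) y with hc
    set F : Bool → (Fin j → Bool) → ℝ := fun b s' =>
      ∑ m ∈ Finset.range (j+1), D' m (fun i => glue j s' (consDrop b y) (m + i.1)) with hF
    set g : Bool → ℝ := fun b => Finset.univ.inf' Finset.univ_nonempty (F b) with hg
    -- Step A: rewrite the RHS summand
    have hA : ∀ s : Fin (j+1) → Bool,
        (∑ m ∈ Finset.range (j+1+1), D' m (fun i => glue (j+1) s y (m + i.1))) =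
        c + F (s (Fin.last j)) (Fin.init s) := by
      intro s
      rw [Finset.sum_range_succ]
      have hterm : D' (j+1) (fun i => glue (j+1) s y (j+1 + i.1)) = c := by
        rw [hc]
        congr 1
        funext i
        have hik := i.isLt
        simp only [glue]
        rw [dif_neg (by omega), dif_pos (by omega)]
        exact congrArg y (Fin.ext (by first | omega | simp | (simp; omega)))
      have hsum : (∑ m ∈ Finset.range (j+1), D' m (fun i => glue (j+1) s y (m + i.1))) =
          F (s (Fin.last j)) (Fin.init s) := by
        apply Finset.sum_congr rfl
        intro m hm
        have hm' : m ≤ j := by have := Finset.mem_range.mp hm; omega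
        congr 1
        funext i
        exact glue_window_eq j s y hm' i
      rw [hterm, hsum]; ring
    have hB : (Finset.univ.inf' Finset.univ_nonempty fun s : Fin (j+1) → Bool =>
        (∑ m ∈ Finset.range (j+1+1), D' m (fun i => glue (j+1) s y (m + i.1)))) =
        Finset.univ.inf' Finset.univ_nonempty
          (fun s : Fin (j+1) → Bool => c + F (s (Fin.last j)) (Fin.init s)) := by
      congr 1
      funext s
      exact hA s
    rw [hB, inf'_const_add]
    congr 1
    -- now: min (g true) (g false) = inf' over s of F (s last) (init s)
    apply le_antisymm
    · apply Finset.le_inf'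
      intro s _
      cases hb : s (Fin.last j)
      · exact le_trans (min_le_right _ _) (Finset.inf'_le _ (Finset.mem_univ (Fin.init s)))
      · exact le_trans (min_le_left _ _) (Finset.inf'_le _ (Finset.mem_univ (Fin.init s)))
    · apply le_min
      · apply Finset.le_inf'
        intro s' _
        refine le_of_le_of_eq (Finset.inf'_le _ (Finset.mem_univ (Fin.snoc s' true))) ?_
        show F ((Fin.snoc s' true : Fin (j+1) → Bool) (Fin.last j))
            (Fin.init (Fin.snoc s' true : Fin (j+1) → Bool)) = F true s'
        rw [Fin.snoc_last, Fin.init_snoc]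
      · apply Finset.le_inf'
        intro s' _
        refine le_of_le_of_eq (Finset.inf'_le _ (Finset.mem_univ (Fin.snoc s' false))) ?_
        show F ((Fin.snoc s' false : Fin (j+1) → Bool) (Fin.last j))
            (Fin.init (Fin.snoc s' false : Fin (j+1) → Bool)) = F false s'
        rw [Fin.snoc_last, Fin.init_snoc]

theorem dp_window_cost_correct {k w n : ℕ} (hk : 1 ≤ k) (hw : 1 ≤ w)
    (hn : n = w + k - 1) (D : Fin w → (Fin k → Bool) → ℝ) :
    (Finset.univ.inf' Finset.univ_nonempty fun t : Fin n → Bool =>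
        ∑ j : Fin w, D j fun i : Fin k =>
          t ⟨j.1 + i.1, by have := j.isLt; have := i.isLt; omega⟩) =
      Finset.univ.inf' Finset.univ_nonempty fun y : Fin k → Bool =>
        Tdp (fun j x => if hj : j < w then D ⟨j, hj⟩ x else 0) (w - 1) y := by
  have hn' : n = (w - 1) + k := by omega
  have hv : Finset.range (w - 1 + 1) = Finset.range w := by
    congr 1; omega
  set D' : ℕ → (Fin k → Bool) → ℝ := fun j x => if hj : j < w then D ⟨j, hj⟩ x else 0 with hD'
  have hrw : (fun y : Fin k → Bool => Tdp D' (w - 1) y) =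
      fun y => Finset.univ.inf' Finset.univ_nonempty
        (fun s : Fin (w-1) → Bool =>
          ∑ m ∈ Finset.range (w-1+1), D' m (fun i => glue (w-1) s y (m + i.1))) := by
    funext y; exact Tdp_eq D' (w-1) y
  rw [hrw]
  apply le_antisymm
  · apply Finset.le_inf'
    intro y _
    apply Finset.le_inf'
    intro s _
    have key : ∀ t : Fin n → Bool, (∀ p : Fin n, t p = glue (w-1) s y p.1) →
        (∑ j : Fin w, D j fun i : Fin k =>
          t ⟨j.1 + i.1, by have := j.isLt; have := i.isLt; omega⟩) =
        ∑ m ∈ Finset.range (w-1+1), D' m (fun i => glue (w-1) s y (m + i.1)) := by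
      intro t ht
      rw [hv, ← Fin.sum_univ_eq_sum_range (fun m => D' m (fun i => glue (w-1) s y (m + i.1)))]
      apply Finset.sum_congr rfl
      intro j _
      show D j _ = D' j.1 _
      rw [hD']
      simp only [dif_pos j.isLt, Fin.eta]
      congr 1
      funext i
      exact ht _
    set t : Fin n → Bool := fun p => glue (w-1) s y p.1 with htdef
    exact le_of_le_of_eq (Finset.inf'_le _ (Finset.mem_univ t)) (key t (fun p => rfl))
  · apply Finset.le_inf'
    intro t _
    set y : Fin k → Bool := fun i => t ⟨w - 1 + i.1, by have := i.isLt; omega⟩ with hy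
    refine le_trans (Finset.inf'_le _ (Finset.mem_univ y)) ?_
    set s : Fin (w-1) → Bool := fun q => t ⟨q.1, by have := q.isLt; omega⟩ with hs
    refine le_of_le_of_eq (Finset.inf'_le _ (Finset.mem_univ s)) ?_
    have hglue : ∀ (p : ℕ) (hp : p < n), glue (w-1) s y p = t ⟨p, hp⟩ :=
      fun p hp => glue_of_agree (w-1) hn' t p hp
    rw [hv, ← Fin.sum_univ_eq_sum_range (fun m => D' m (fun i => glue (w-1) s y (m + i.1)))]
    apply Finset.sum_congr rfl
    intro j _
    show D' j.1 _ = D j _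
    rw [hD']
    simp only [dif_pos j.isLt, Fin.eta]
    congr 1
    funext i
    exact hglue (j.1 + i.1) (by have := j.isLt; have := i.isLt; omega)
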